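/- The set of paths from src explored by the taint-restricted DFS is exactly the set of simple paths from src in G that contain no subpath of three consecutive untainted vertices. -/

import Mathlib

/-- `p` contains three consecutive untainted vertices. -/
def threeConsecUntainted {V : Type*} (taint : V → Bool) (p : List V) : Prop :=
  ∃ i, ∀ k < 3, ∃ v, p[i + k]? = some v ∧ taint v = false

/-- TDFS-generable paths from `src`, stored in reverse
(head of the list = most recently visited vertex, last = `src`). -/
inductive TDFS {V : Type*} (E : V → V → Prop) (taint : V → Bool) (src : V) :
    List V → Prop
  | base : TDFS E taint src [src]
  | step (p : List V) (u v : V) :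
      TDFS E taint src p → p.head? = some u → E u v → v ∉ p →
      ¬ threeConsecUntainted taint (v :: p) → TDFS E taint src (v :: p)

/-- The set of paths explored by the taint-restricted DFS from `src` is exactly
the set of simple paths from `src` (here stored in reverse, so `src` is the
last element and consecutive list elements `a :: b :: _` satisfy `E b a`)
containing no three consecutive untainted vertices. -/

lemma tcu_cons {V : Type*} (taint : V → Bool) (v : V) (p : List V) :
    threeConsecUntainted taint p → threeConsecUntainted taint (v :: p) := by
  rintro ⟨i, h⟩
  refine ⟨i + 1, fun k hk => ?_⟩
  obtain ⟨w, hw, ht⟩ := h k hk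
  refine ⟨w, ?_, ht⟩
  have : i + 1 + k = (i + k) + 1 := by omega
  rw [this, List.getElem?_cons_succ]
  exact hw

theorem stmt2 {V : Type*} (E : V → V → Prop) (taint : V → Bool) (src : V)
    (p : List V) :
    TDFS E taint src p ↔
      (p ≠ [] ∧ p.getLast? = some src ∧ p.Nodup ∧
        List.Chain' (fun a b => E b a) p ∧
        ¬ threeConsecUntainted taint p) := by
  constructor
  · intro h
    induction h with
    | base =>
      refine ⟨by simp, by simp, by simp, List.isChain_singleton _, ?_⟩
      rintro ⟨i, h⟩
      obtain ⟨w, hw, -⟩ := h 1 (by norm_num)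
      simp at hw
    | step p u v hp hu hE hv htcu ih =>
      obtain ⟨hne, hlast, hnd, hch, -⟩ := ih
      refine ⟨by simp, ?_, List.nodup_cons.mpr ⟨hv, hnd⟩, ?_, htcu⟩
      · cases p with
        | nil => exact absurd rfl hne
        | cons a l => rwa [List.getLast?_cons_cons]
      · unfold List.Chain'
        rw [List.isChain_cons]
        refine ⟨fun b hb => ?_, hch⟩
        rw [Option.mem_def, hu, Option.some_inj] at hb
        subst hb
        exact hE
  · induction p with
    | nil => rintro ⟨h, -⟩; exact absurd rfl h
    | cons v p ih =>
      rintro ⟨-, hlast, hnd, hch, htcu⟩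
      cases p with
      | nil =>
        simp only [List.getLast?_singleton, Option.some_inj] at hlast
        subst hlast
        exact TDFS.base
      | cons a l =>
        rw [List.getLast?_cons_cons] at hlast
        rw [List.nodup_cons] at hnd
        unfold List.Chain' at hch
        rw [List.isChain_cons] at hch
        have ht := ih ⟨by simp, hlast, hnd.2, hch.2,
          fun h => htcu (tcu_cons _ _ _ h)⟩
        exact TDFS.step _ a v ht rfl (hch.1 a rfl) hnd.1 htcu
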